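/- arXiv:1003.2958 — 5 statements merged into one kernel-verified Lean document; each statement's English description precedes it below -/
import Mathlib

section
/- Let w be a weighted graph on a finite vertex set V with |V| = n whose support graph is connected, let L be its Laplacian and L⁺ the Moore–Penrose pseudoinverse of L. Then the sum over all unordered pairs {u,v} with w(u,v) > 0 of w(u,v) · (χ_u − χ_v)ᵀ L⁺ (χ_u − χ_v) equals n − 1, where χ_u denotes the indicator vector of vertex u. -/
open Matrix

section Aux

variable {V : Type*} [Fintype V] [DecidableEq V]

private lemma quad_form_aux (M : Matrix V V ℝ) (u v : V) :
    (Pi.single u 1 - Pi.single v 1 : V → ℝ) ⬝ᵥ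
      (M *ᵥ (Pi.single u 1 - Pi.single v 1 : V → ℝ)) =
    M u u - M u v - M v u + M v v := by
  simp [dotProduct, mulVec, Pi.sub_apply, Pi.single_apply, sub_mul, mul_sub,
    Finset.sum_sub_distrib, Finset.sum_ite_eq', ite_mul]
  ring

private lemma walk_const {G : SimpleGraph V} {x : V → ℝ}
    (h : ∀ a b, G.Adj a b → x a = x b) {u v : V} (p : G.Walk u v) : x u = x v := by
  induction p with
  | nil => rfl
  | cons h' _ ih => exact (h _ _ h').trans ih

end Aux

/-- For a connected weighted graph on `n` vertices with Laplacian `L`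
and pseudoinverse `L⁺`, the sum over edges of `w(u,v) · (χ_u − χ_v)ᵀ L⁺ (χ_u − χ_v)`
equals `n − 1`.  (The sum over unordered pairs is written as half the sum over
ordered pairs.) -/
theorem sum_effective_resistance_eq {V : Type*} [Fintype V] [DecidableEq V]
    (n : ℕ) (hn : Fintype.card V = n)
    (w : V → V → ℝ) (hsym : ∀ u v, w u v = w v u)
    (hnn : ∀ u v, 0 ≤ w u v) (hdiag : ∀ u, w u u = 0)
    (G : SimpleGraph V) (hG : ∀ u v, G.Adj u v ↔ 0 < w u v) (hconn : G.Connected)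
    (L Lp : Matrix V V ℝ)
    (hL : L = Matrix.of fun u v => if u = v then ∑ x, w u x else - w u v)
    (hp1 : L * Lp * L = L) (hp2 : Lp * L * Lp = Lp)
    (hp3 : (L * Lp)ᵀ = L * Lp) (hp4 : (Lp * L)ᵀ = Lp * L) :
    (∑ u, ∑ v, if 0 < w u v then
        w u v * ((Pi.single u 1 - Pi.single v 1 : V → ℝ) ⬝ᵥ
          (Lp *ᵥ (Pi.single u 1 - Pi.single v 1 : V → ℝ)))
      else 0) / 2 = (n : ℝ) - 1 := by
  have hne : Nonempty V := hconn.nonempty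
  obtain ⟨u0⟩ := hne
  -- entries of L
  have hLent : ∀ u v, L u v = (if u = v then ∑ t, w u t else 0) - w u v := by
    intro u v
    by_cases h : u = v
    · subst h; simp [hL, hdiag]
    · simp [hL, h]
  -- row sums of L are zero
  have hrow : ∀ u, ∑ v, L u v = 0 := by
    intro u
    simp [hLent, Finset.sum_sub_distrib, Finset.sum_ite_eq', hdiag]
  -- mulVec formula
  have hmv : ∀ (x : V → ℝ) (u : V), (L *ᵥ x) u = ∑ v, w u v * (x u - x v) := by
    intro x u
    simp only [mulVec, dotProduct, hLent, sub_mul, ite_mul, zero_mul,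
      Finset.sum_sub_distrib, Finset.sum_ite_eq, Finset.mem_univ, if_true,
      mul_sub]
    rw [Finset.sum_mul]
  -- quadratic form
  have hquad : ∀ x : V → ℝ, 2 * (x ⬝ᵥ (L *ᵥ x)) = ∑ u, ∑ v, w u v * (x u - x v) ^ 2 := by
    intro x
    have h1 : x ⬝ᵥ (L *ᵥ x) = ∑ u, ∑ v, w u v * (x u * (x u - x v)) := by
      simp only [dotProduct, hmv, Finset.mul_sum]
      exact Finset.sum_congr rfl fun u _ => Finset.sum_congr rfl fun v _ => by ring
    have h2 : x ⬝ᵥ (L *ᵥ x) = ∑ u, ∑ v, w u v * (x v * (x v - x u)) := by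
      rw [h1, Finset.sum_comm]
      exact Finset.sum_congr rfl fun u _ => Finset.sum_congr rfl fun v _ => by
        rw [hsym u v]
    calc 2 * (x ⬝ᵥ (L *ᵥ x)) = x ⬝ᵥ (L *ᵥ x) + x ⬝ᵥ (L *ᵥ x) := by ring
    _ = (∑ u, ∑ v, w u v * (x u * (x u - x v)))
        + ∑ u, ∑ v, w u v * (x v * (x v - x u)) := congrArg₂ (· + ·) h1 h2
    _ = ∑ u, ((∑ v, w u v * (x u * (x u - x v)))
        + ∑ v, w u v * (x v * (x v - x u))) := Finset.sum_add_distrib.symm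
    _ = ∑ u, ∑ v, (w u v * (x u * (x u - x v)) + w u v * (x v * (x v - x u))) :=
        Finset.sum_congr rfl fun u _ => Finset.sum_add_distrib.symm
    _ = ∑ u, ∑ v, w u v * (x u - x v) ^ 2 :=
        Finset.sum_congr rfl fun u _ => Finset.sum_congr rfl fun v _ => by ring
  -- kernel of L is the constants
  have hker : ∀ x : V → ℝ, L *ᵥ x = 0 ↔ ∃ c : ℝ, x = fun _ => c := by
    intro x
    constructor
    · intro hx
      have hQ : ∑ u, ∑ v, w u v * (x u - x v) ^ 2 = 0 := by
        rw [← hquad, hx]; simp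
      have hterm : ∀ u v : V, w u v * (x u - x v) ^ 2 = 0 := by
        have h1 := (Finset.sum_eq_zero_iff_of_nonneg (fun u _ =>
          Finset.sum_nonneg fun v _ => mul_nonneg (hnn u v) (sq_nonneg _))).mp hQ
        intro u v
        have h2 := (Finset.sum_eq_zero_iff_of_nonneg (fun v _ =>
          mul_nonneg (hnn u v) (sq_nonneg _))).mp (h1 u (Finset.mem_univ u))
        exact h2 v (Finset.mem_univ v)
      have hadj : ∀ a b, G.Adj a b → x a = x b := by
        intro a b hab
        have hw : 0 < w a b := (hG a b).mp hab
        have := hterm a b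
        have h0 : (x a - x b) ^ 2 = 0 := by
          rcases mul_eq_zero.mp this with h | h
          · exact absurd h (ne_of_gt hw)
          · exact h
        have := pow_eq_zero_iff (n := 2) (by norm_num) |>.mp h0
        linarith [sub_eq_zero.mp this]
      refine ⟨x u0, funext fun v => ?_⟩
      obtain ⟨p⟩ := (hconn v u0)
      exact walk_const hadj p
    · rintro ⟨c, rfl⟩
      funext u
      simp only [mulVec, dotProduct, Pi.zero_apply]
      rw [← Finset.sum_mul, hrow, zero_mul]
  -- trace of L * Lp equals n - 1
  set P : Matrix V V ℝ := Lp * L with hP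
  have hPP : P * P = P := by
    rw [hP]
    calc Lp * L * (Lp * L) = Lp * L * Lp * L := by rw [Matrix.mul_assoc (Lp * L) Lp L]
    _ = Lp * L := by rw [hp2]
  set f : (V → ℝ) →ₗ[ℝ] (V → ℝ) := Matrix.toLin' P with hf
  have hff : ∀ y, f (f y) = f y := by
    intro y
    have : f ∘ₗ f = f := by
      rw [hf, ← Matrix.toLin'_mul, hPP]
    exact LinearMap.congr_fun this y
  have hproj : LinearMap.IsProj (LinearMap.range f) f := by
    refine ⟨fun x => LinearMap.mem_range_self f x, ?_⟩
    rintro x ⟨y, rfl⟩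
    exact hff y
  have htr : LinearMap.trace ℝ (V → ℝ) f = (Module.finrank ℝ (LinearMap.range f) : ℝ) :=
    hproj.trace
  have htrP : LinearMap.trace ℝ (V → ℝ) f = Matrix.trace P := by
    rw [LinearMap.trace_eq_matrix_trace ℝ (Pi.basisFun ℝ V) f,
      LinearMap.toMatrix_eq_toMatrix', hf, LinearMap.toMatrix'_toLin']
  -- kernel of f equals kernel of L
  have hkerf : LinearMap.ker f = LinearMap.ker (Matrix.toLin' L) := by
    ext x
    simp only [LinearMap.mem_ker, hf, Matrix.toLin'_apply]
    constructor
    · intro hx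
      have hLP : L * P = L := by
        rw [hP, ← Matrix.mul_assoc, hp1]
      calc L *ᵥ x = (L * P) *ᵥ x := by rw [hLP]
      _ = L *ᵥ (P *ᵥ x) := by rw [← Matrix.mulVec_mulVec]
      _ = 0 := by rw [hx, Matrix.mulVec_zero]
    · intro hx
      calc P *ᵥ x = Lp *ᵥ (L *ᵥ x) := by rw [hP, ← Matrix.mulVec_mulVec]
      _ = 0 := by rw [hx, Matrix.mulVec_zero]
  have hkerL : LinearMap.ker (Matrix.toLin' L) = Submodule.span ℝ {(1 : V → ℝ)} := by
    ext x
    rw [LinearMap.mem_ker, Matrix.toLin'_apply, hker x, Submodule.mem_span_singleton]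
    constructor
    · rintro ⟨c, rfl⟩; exact ⟨c, funext fun v => by simp⟩
    · rintro ⟨c, rfl⟩; exact ⟨c, funext fun v => by simp⟩
  have hone : (1 : V → ℝ) ≠ 0 := by
    intro h
    have := congrFun h u0
    simp at this
  have hkerdim : Module.finrank ℝ (LinearMap.ker f) = 1 := by
    rw [hkerf, hkerL]
    exact finrank_span_singleton hone
  have hrn := LinearMap.finrank_range_add_finrank_ker f
  rw [hkerdim, Module.finrank_fintype_fun_eq_card, hn] at hrn
  -- so trace P = n - 1 as reals
  have hn1 : 1 ≤ n := by omega
  have htrval : Matrix.trace P = (n : ℝ) - 1 := by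
    rw [← htrP, htr]
    have : (Module.finrank ℝ (LinearMap.range f) : ℝ) + 1 = (n : ℝ) := by
      exact_mod_cast congrArg (fun k : ℕ => (k : ℝ)) hrn
    linarith
  -- now relate the sum to the trace
  have hifremove : ∀ u v : V, (if 0 < w u v then
      w u v * ((Pi.single u 1 - Pi.single v 1 : V → ℝ) ⬝ᵥ
        (Lp *ᵥ (Pi.single u 1 - Pi.single v 1 : V → ℝ))) else 0)
      = w u v * (Lp u u - Lp u v - Lp v u + Lp v v) := by
    intro u v
    by_cases h : 0 < w u v
    · rw [if_pos h, quad_form_aux]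
    · rw [if_neg h]
      have hw0 : w u v = 0 := le_antisymm (not_lt.mp h) (hnn u v)
      rw [hw0, zero_mul]
  have hsum : (∑ u, ∑ v, if 0 < w u v then
      w u v * ((Pi.single u 1 - Pi.single v 1 : V → ℝ) ⬝ᵥ
        (Lp *ᵥ (Pi.single u 1 - Pi.single v 1 : V → ℝ))) else 0)
      = 2 * Matrix.trace P := by
    simp only [hifremove]
    -- expand
    have hD : (∑ u, ∑ v, w u v * Lp v v) = ∑ u, ∑ v, w u v * Lp u u := by
      rw [Finset.sum_comm]
      exact Finset.sum_congr rfl fun u _ => Finset.sum_congr rfl fun v _ => by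
        rw [hsym u v]
    have hC : (∑ u, ∑ v, w u v * Lp u v) = ∑ u, ∑ v, w u v * Lp v u := by
      rw [Finset.sum_comm]
      exact Finset.sum_congr rfl fun u _ => Finset.sum_congr rfl fun v _ => by
        rw [hsym u v]
    have hsplit : (∑ u, ∑ v, w u v * (Lp u u - Lp u v - Lp v u + Lp v v))
        = (∑ u, ∑ v, w u v * Lp u u) - (∑ u, ∑ v, w u v * Lp u v)
          - (∑ u, ∑ v, w u v * Lp v u) + (∑ u, ∑ v, w u v * Lp v v) := by
      simp only [← Finset.sum_add_distrib, ← Finset.sum_sub_distrib]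
      exact Finset.sum_congr rfl fun u _ => Finset.sum_congr rfl fun v _ => by ring
    have htrace : Matrix.trace P = (∑ u, ∑ v, w u v * Lp u u)
        - (∑ u, ∑ v, w u v * Lp v u) := by
      have : Matrix.trace P = Matrix.trace (L * Lp) := by
        rw [hP, Matrix.trace_mul_comm]
      rw [this, Matrix.trace, ← Finset.sum_sub_distrib]
      refine Finset.sum_congr rfl fun u _ => ?_
      rw [Matrix.diag_apply, Matrix.mul_apply]
      simp only [hLent, sub_mul, ite_mul, zero_mul, Finset.sum_sub_distrib,
        Finset.sum_ite_eq, Finset.mem_univ, if_true]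
      rw [Finset.sum_mul]
    rw [hsplit, hD, hC, htrace]
    ring
  rw [hsum, htrval]
  ring
end

section
/- Let B be an m×n real matrix, L = Bᵀ B, L⁺ the Moore–Penrose pseudoinverse of L, and Π = B L⁺ Bᵀ. Let S be an m×m diagonal matrix with nonnegative diagonal entries and let L̃ = Bᵀ S B. If ε ≥ 0 is a real number such that |yᵀ (Π S Π − Π) y| ≤ ε · ‖y‖² for every y ∈ ℝᵐ (Euclidean norm), then (1 − ε) · L ⪯ L̃ ⪯ (1 + ε) · L in the Loewner order. -/
open Matrix

private lemma tmul_self_zero {m n : ℕ} (M : Matrix (Fin m) (Fin n) ℝ)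
    (h : Mᵀ * M = 0) : M = 0 := by
  have : Mᴴ * M = 0 := by rw [Matrix.conjTranspose_eq_transpose_of_trivial]; exact h
  exact (Matrix.conjTranspose_mul_self_eq_zero (A := M)).mp this

/-- If `‖Π S Π − Π‖` (as a quadratic form) is at most `ε`, then
`(1 − ε) L ⪯ L̃ ⪯ (1 + ε) L` in the Loewner order, where `L = Bᵀ B`, `Π = B L⁺ Bᵀ`
and `L̃ = Bᵀ S B` for a nonnegative diagonal `S`. -/
theorem loewner_bound_of_projection_perturbation {m n : ℕ}
    (B : Matrix (Fin m) (Fin n) ℝ) (L Lp Ltil : Matrix (Fin n) (Fin n) ℝ)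
    (S : Matrix (Fin m) (Fin m) ℝ)
    (hL : L = Bᵀ * B)
    (hp1 : L * Lp * L = L) (hp2 : Lp * L * Lp = Lp)
    (hp3 : (L * Lp)ᵀ = L * Lp) (hp4 : (Lp * L)ᵀ = Lp * L)
    (hSdiag : ∀ i j, i ≠ j → S i j = 0) (hSnn : ∀ i, 0 ≤ S i i)
    (hLtil : Ltil = Bᵀ * S * B)
    (Pr : Matrix (Fin m) (Fin m) ℝ) (hPr : Pr = B * Lp * Bᵀ)
    (ε : ℝ) (hε : 0 ≤ ε)
    (hbound : ∀ y : Fin m → ℝ, |y ⬝ᵥ ((Pr * S * Pr - Pr) *ᵥ y)| ≤ ε * (y ⬝ᵥ y)) :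
    (Ltil - (1 - ε) • L).PosSemidef ∧ ((1 + ε) • L - Ltil).PosSemidef := by
  have hLsymm : Lᵀ = L := by rw [hL, Matrix.transpose_mul, Matrix.transpose_transpose]
  -- B * Lp * L = B
  have hBLpL : B * Lp * L = B := by
    have key : (B * Lp * L - B)ᵀ * (B * Lp * L - B) = 0 := by
      have ht : (B * Lp * L - B)ᵀ = Lp * L * Bᵀ - Bᵀ := by
        rw [Matrix.transpose_sub, Matrix.mul_assoc, Matrix.transpose_mul, hp4]
      rw [ht, Matrix.sub_mul, Matrix.mul_sub, Matrix.mul_sub]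
      have e1 : Lp * L * Bᵀ * (B * Lp * L) = Lp * (L * L) := by
        calc Lp * L * Bᵀ * (B * Lp * L)
            = Lp * (L * ((Bᵀ * B) * (Lp * L))) := by simp only [Matrix.mul_assoc]
          _ = Lp * (L * (L * (Lp * L))) := by rw [← hL]
          _ = Lp * (L * (L * Lp * L)) := by rw [Matrix.mul_assoc L Lp L]
          _ = Lp * (L * L) := by rw [hp1]
      have e2 : Lp * L * Bᵀ * B = Lp * (L * L) := by
        calc Lp * L * Bᵀ * B = Lp * (L * (Bᵀ * B)) := by simp only [Matrix.mul_assoc]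
          _ = Lp * (L * L) := by rw [← hL]
      have e3 : Bᵀ * (B * Lp * L) = L := by
        calc Bᵀ * (B * Lp * L) = (Bᵀ * B) * Lp * L := by simp only [Matrix.mul_assoc]
          _ = L := by rw [← hL, hp1]
      rw [e1, e2, e3, ← hL]
      abel
    exact sub_eq_zero.mp (tmul_self_zero _ key)
  -- B * L * Lp = B
  have hBLLp : B * L * Lp = B := by
    have key : (B * L * Lp - B)ᵀ * (B * L * Lp - B) = 0 := by
      have ht : (B * L * Lp - B)ᵀ = L * Lp * Bᵀ - Bᵀ := by
        rw [Matrix.transpose_sub, Matrix.mul_assoc, Matrix.transpose_mul, hp3]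
      rw [ht, Matrix.sub_mul, Matrix.mul_sub, Matrix.mul_sub]
      have e1 : L * Lp * Bᵀ * (B * L * Lp) = L * (L * Lp) := by
        calc L * Lp * Bᵀ * (B * L * Lp)
            = L * (Lp * ((Bᵀ * B) * (L * Lp))) := by simp only [Matrix.mul_assoc]
          _ = L * (Lp * (L * (L * Lp))) := by rw [← hL]
          _ = (L * Lp * L) * (L * Lp) := by simp only [Matrix.mul_assoc]
          _ = L * (L * Lp) := by rw [hp1]
      have e2 : L * Lp * Bᵀ * B = L := by
        calc L * Lp * Bᵀ * B = L * Lp * (Bᵀ * B) := by simp only [Matrix.mul_assoc]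
          _ = L := by rw [← hL, hp1]
      have e3 : Bᵀ * (B * L * Lp) = L * (L * Lp) := by
        calc Bᵀ * (B * L * Lp) = (Bᵀ * B) * (L * Lp) := by simp only [Matrix.mul_assoc]
          _ = L * (L * Lp) := by rw [← hL]
      rw [e1, e2, e3, ← hL]
      abel
    exact sub_eq_zero.mp (tmul_self_zero _ key)
  -- Pr * B = B and Bᵀ * Pr = Bᵀ
  have hPrB : Pr * B = B := by
    calc Pr * B = B * Lp * (Bᵀ * B) := by rw [hPr]; simp only [Matrix.mul_assoc]
      _ = B * Lp * L := by rw [← hL]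
      _ = B := hBLpL
  have hBtPr : Bᵀ * Pr = Bᵀ := by
    have h2 : L * Lp * Bᵀ = (B * L * Lp)ᵀ := by
      rw [Matrix.mul_assoc B L Lp, Matrix.transpose_mul, hp3, Matrix.mul_assoc]
    calc Bᵀ * Pr = (Bᵀ * B) * Lp * Bᵀ := by rw [hPr]; simp only [Matrix.mul_assoc]
      _ = L * Lp * Bᵀ := by rw [← hL]
      _ = (B * L * Lp)ᵀ := h2
      _ = Bᵀ := by rw [hBLLp]
  -- key matrix identity
  have hKey : Bᵀ * (Pr * S * Pr - Pr) * B = Ltil - L := by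
    rw [Matrix.mul_sub, Matrix.sub_mul]
    have e1 : Bᵀ * (Pr * S * Pr) * B = Ltil := by
      calc Bᵀ * (Pr * S * Pr) * B = (Bᵀ * Pr) * S * (Pr * B) := by
            simp only [Matrix.mul_assoc]
        _ = Bᵀ * S * B := by rw [hBtPr, hPrB]
        _ = Ltil := hLtil.symm
    have e2 : Bᵀ * Pr * B = L := by rw [hBtPr, ← hL]
    rw [e1, e2]
  -- transfer quadratic forms
  have keyform : ∀ (M : Matrix (Fin m) (Fin m) ℝ) (x : Fin n → ℝ),
      (B *ᵥ x) ⬝ᵥ (M *ᵥ (B *ᵥ x)) = x ⬝ᵥ ((Bᵀ * M * B) *ᵥ x) := by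
    intro M x
    rw [Matrix.mulVec_mulVec, Matrix.dotProduct_mulVec, Matrix.vecMul_mulVec,
      ← Matrix.dotProduct_mulVec, ← Matrix.mul_assoc]
  have hnorm : ∀ x : Fin n → ℝ, (B *ᵥ x) ⬝ᵥ (B *ᵥ x) = x ⬝ᵥ (L *ᵥ x) := by
    intro x
    rw [Matrix.dotProduct_mulVec, Matrix.vecMul_mulVec, ← Matrix.dotProduct_mulVec, ← hL]
  have hquad : ∀ x : Fin n → ℝ,
      |x ⬝ᵥ (Ltil *ᵥ x) - x ⬝ᵥ (L *ᵥ x)| ≤ ε * (x ⬝ᵥ (L *ᵥ x)) := by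
    intro x
    have h := hbound (B *ᵥ x)
    rw [keyform _ x, hnorm x, hKey] at h
    simpa [Matrix.sub_mulVec, dotProduct_sub] using h
  have hLnn : ∀ x : Fin n → ℝ, 0 ≤ x ⬝ᵥ (L *ᵥ x) := by
    intro x
    rw [← hnorm x, dotProduct]
    exact Finset.sum_nonneg fun i _ => mul_self_nonneg _
  -- symmetry facts
  have hSsymm : Sᵀ = S := by
    ext i j
    by_cases hij : i = j
    · subst hij; rfl
    · rw [Matrix.transpose_apply, hSdiag j i (Ne.symm hij), hSdiag i j hij]
  have hLtilsymm : Ltilᵀ = Ltil := by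
    rw [hLtil, Matrix.transpose_mul, Matrix.transpose_mul, Matrix.transpose_transpose,
      hSsymm, Matrix.mul_assoc]
  constructor
  · rw [Matrix.posSemidef_iff_dotProduct_mulVec]
    constructor
    · show (Ltil - (1 - ε) • L)ᴴ = _
      rw [Matrix.conjTranspose_eq_transpose_of_trivial, Matrix.transpose_sub,
        Matrix.transpose_smul, hLtilsymm, hLsymm]
    · intro x
      rw [star_trivial]
      have h := (abs_le.mp (hquad x)).1
      have hq := hLnn x
      have expand : x ⬝ᵥ ((Ltil - (1 - ε) • L) *ᵥ x)
          = x ⬝ᵥ (Ltil *ᵥ x) - (1 - ε) * (x ⬝ᵥ (L *ᵥ x)) := by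
        simp [Matrix.sub_mulVec, dotProduct_sub, Matrix.smul_mulVec,
          dotProduct_smul, smul_eq_mul]
      rw [expand]
      nlinarith
  · rw [Matrix.posSemidef_iff_dotProduct_mulVec]
    constructor
    · show ((1 + ε) • L - Ltil)ᴴ = _
      rw [Matrix.conjTranspose_eq_transpose_of_trivial, Matrix.transpose_sub,
        Matrix.transpose_smul, hLtilsymm, hLsymm]
    · intro x
      rw [star_trivial]
      have h := (abs_le.mp (hquad x)).2
      have hq := hLnn x
      have expand : x ⬝ᵥ (((1 + ε) • L - Ltil) *ᵥ x)
          = (1 + ε) * (x ⬝ᵥ (L *ᵥ x)) - x ⬝ᵥ (Ltil *ᵥ x) := by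
        simp [Matrix.sub_mulVec, dotProduct_sub, Matrix.smul_mulVec,
          dotProduct_smul, smul_eq_mul]
      rw [expand]
      nlinarith
end

section
/- Let A and B be n×n real symmetric positive semidefinite matrices with A ⪯ B in the Loewner order and with equal kernels (A x = 0 iff B x = 0). Then B⁺ ⪯ A⁺, i.e., xᵀ B⁺ x ≤ xᵀ A⁺ x for every x ∈ ℝⁿ, where A⁺ and B⁺ denote Moore–Penrose pseudoinverses. -/
open Matrix

/-- A matrix is determined by its action on vectors. -/
lemma eq_of_mulVec_eq {n : ℕ} {M N : Matrix (Fin n) (Fin n) ℝ}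
    (h : ∀ v, M *ᵥ v = N *ᵥ v) : M = N := by
  ext i j
  have := congrFun (h (Pi.single j 1)) i
  simpa [mulVec_single] using this

/-- Uniqueness of the Moore–Penrose pseudoinverse. -/
lemma mp_unique {n : ℕ} (A P Q : Matrix (Fin n) (Fin n) ℝ)
    (h1 : A * P * A = A) (h2 : P * A * P = P)
    (h3 : (A * P)ᵀ = A * P) (h4 : (P * A)ᵀ = P * A)
    (g1 : A * Q * A = A) (g2 : Q * A * Q = Q)
    (g3 : (A * Q)ᵀ = A * Q) (g4 : (Q * A)ᵀ = Q * A) :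
    P = Q := by
  have step1 : A * P = A * Q := by
    calc A * P = (A * P)ᵀ := h3.symm
    _ = Pᵀ * Aᵀ := by rw [transpose_mul]
    _ = Pᵀ * (A * Q * A)ᵀ := by rw [g1]
    _ = Pᵀ * (Aᵀ * (A * Q)ᵀ) := by rw [transpose_mul (A * Q) A]
    _ = (Pᵀ * Aᵀ) * (A * Q) := by rw [g3, mul_assoc]
    _ = (A * P)ᵀ * (A * Q) := by rw [transpose_mul]
    _ = (A * P) * (A * Q) := by rw [h3]
    _ = (A * P * A) * Q := by simp only [mul_assoc]
    _ = A * Q := by rw [h1]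
  have step2 : P * A = Q * A := by
    calc P * A = (P * A)ᵀ := h4.symm
    _ = Aᵀ * Pᵀ := by rw [transpose_mul]
    _ = (A * Q * A)ᵀ * Pᵀ := by rw [g1]
    _ = (Aᵀ * Qᵀ * Aᵀ) * Pᵀ := by simp only [transpose_mul, mul_assoc]
    _ = ((Q * A)ᵀ * Aᵀ) * Pᵀ := by rw [transpose_mul]
    _ = (Q * A) * (Aᵀ * Pᵀ) := by rw [g4, mul_assoc]
    _ = (Q * A) * (P * A)ᵀ := by rw [transpose_mul]
    _ = (Q * A) * (P * A) := by rw [h4]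
    _ = Q * (A * P * A) := by simp only [mul_assoc]
    _ = Q * A := by rw [h1]
  calc P = P * A * P := h2.symm
  _ = Q * A * P := by rw [step2]
  _ = Q * (A * P) := by rw [mul_assoc]
  _ = Q * (A * Q) := by rw [step1]
  _ = Q * A * Q := by rw [mul_assoc]
  _ = Q := g2

/-- If `A ⪯ B` are positive semidefinite with equal kernels, then
`B⁺ ⪯ A⁺` as quadratic forms. -/
theorem pinv_antitone {n : ℕ} (A B Ap Bp : Matrix (Fin n) (Fin n) ℝ)
    (hA : A.PosSemidef) (hB : B.PosSemidef)
    (hAB : (B - A).PosSemidef)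
    (hker : ∀ x : Fin n → ℝ, A *ᵥ x = 0 ↔ B *ᵥ x = 0)
    (hA1 : A * Ap * A = A) (hA2 : Ap * A * Ap = Ap)
    (hA3 : (A * Ap)ᵀ = A * Ap) (hA4 : (Ap * A)ᵀ = Ap * A)
    (hB1 : B * Bp * B = B) (hB2 : Bp * B * Bp = Bp)
    (hB3 : (B * Bp)ᵀ = B * Bp) (hB4 : (Bp * B)ᵀ = Bp * B) :
    ∀ x : Fin n → ℝ, x ⬝ᵥ (Bp *ᵥ x) ≤ x ⬝ᵥ (Ap *ᵥ x) := by
  have hAsym : Aᵀ = A := by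
    have := hA.1; rwa [← conjTranspose_eq_transpose_of_trivial]
  have hBsym : Bᵀ = B := by
    have := hB.1; rwa [← conjTranspose_eq_transpose_of_trivial]
  -- Apᵀ is also a pseudoinverse of A; by uniqueness Ap is symmetric.
  have transpose_pinv : ∀ (M Mp : Matrix (Fin n) (Fin n) ℝ), Mᵀ = M →
      M * Mp * M = M → Mp * M * Mp = Mp → (M * Mp)ᵀ = M * Mp → (Mp * M)ᵀ = Mp * M →
      Mpᵀ = Mp := by
    intro M Mp hMs h1 h2 h3 h4
    refine mp_unique M Mpᵀ Mp ?_ ?_ ?_ ?_ h1 h2 h3 h4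
    · have h := congrArg Matrix.transpose h1
      simp only [transpose_mul, hMs] at h
      rw [mul_assoc]; exact h
    · have h := congrArg Matrix.transpose h2
      simp only [transpose_mul, hMs] at h
      rw [mul_assoc]; exact h
    · calc (M * Mpᵀ)ᵀ = Mp * Mᵀ := by rw [transpose_mul, transpose_transpose]
      _ = Mp * M := by rw [hMs]
      _ = (Mp * M)ᵀ := h4.symm
      _ = Mᵀ * Mpᵀ := by rw [transpose_mul]
      _ = M * Mpᵀ := by rw [hMs]
    · calc (Mpᵀ * M)ᵀ = Mᵀ * Mp := by rw [transpose_mul, transpose_transpose]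
      _ = M * Mp := by rw [hMs]
      _ = (M * Mp)ᵀ := h3.symm
      _ = Mpᵀ * Mᵀ := by rw [transpose_mul]
      _ = Mpᵀ * M := by rw [hMs]
  have hApsym : Apᵀ = Ap := transpose_pinv A Ap hAsym hA1 hA2 hA3 hA4
  have hBpsym : Bpᵀ = Bp := transpose_pinv B Bp hBsym hB1 hB2 hB3 hB4
  have hAcomm : A * Ap = Ap * A := by
    rw [← hA4, transpose_mul, hAsym, hApsym]
  -- The projections Ap*A and Bp*B agree (symmetric idempotents with equal kernels).
  have hP2 : (Ap * A) * (Ap * A) = Ap * A := by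
    calc (Ap * A) * (Ap * A) = Ap * (A * Ap * A) := by simp only [mul_assoc]
    _ = Ap * A := by rw [hA1]
  have hQ2 : (Bp * B) * (Bp * B) = Bp * B := by
    calc (Bp * B) * (Bp * B) = Bp * (B * Bp * B) := by simp only [mul_assoc]
    _ = Bp * B := by rw [hB1]
  have kerP : ∀ v, (Ap * A) *ᵥ v = 0 ↔ A *ᵥ v = 0 := by
    intro v
    constructor
    · intro h
      have h2 : A *ᵥ v = (A * (Ap * A)) *ᵥ v := by
        rw [← mul_assoc, hA1]
      rw [h2, ← mulVec_mulVec, h, mulVec_zero]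
    · intro h
      rw [← mulVec_mulVec, h, mulVec_zero]
  have kerQ : ∀ v, (Bp * B) *ᵥ v = 0 ↔ B *ᵥ v = 0 := by
    intro v
    constructor
    · intro h
      have h2 : B *ᵥ v = (B * (Bp * B)) *ᵥ v := by
        rw [← mul_assoc, hB1]
      rw [h2, ← mulVec_mulVec, h, mulVec_zero]
    · intro h
      rw [← mulVec_mulVec, h, mulVec_zero]
  have hPQ' : ∀ (R S : Matrix (Fin n) (Fin n) ℝ), S * S = S →
      (∀ v, S *ᵥ v = 0 → R *ᵥ v = 0) → R * S = R := by
    intro R S hS2 hk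
    refine eq_of_mulVec_eq fun v => ?_
    have h0 : S *ᵥ (v - S *ᵥ v) = 0 := by
      rw [mulVec_sub, mulVec_mulVec, hS2, sub_self]
    have h1 : R *ᵥ (v - S *ᵥ v) = 0 := hk _ h0
    rw [mulVec_sub, mulVec_mulVec, sub_eq_zero] at h1
    exact h1.symm
  have hPQ : (Ap * A) * (Bp * B) = Ap * A :=
    hPQ' _ _ hQ2 fun v hv => (kerP v).2 ((hker v).2 ((kerQ v).1 hv))
  have hQP : (Bp * B) * (Ap * A) = Bp * B :=
    hPQ' _ _ hP2 fun v hv => (kerQ v).2 ((hker v).1 ((kerP v).1 hv))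
  have hPeqQ : Ap * A = Bp * B := by
    calc Ap * A = (Ap * A) * (Bp * B) := hPQ.symm
    _ = (Ap * A)ᵀ * (Bp * B)ᵀ := by rw [hA4, hB4]
    _ = ((Bp * B) * (Ap * A))ᵀ := (transpose_mul _ _).symm
    _ = (Bp * B)ᵀ := by rw [hQP]
    _ = Bp * B := hB4
  -- Key product identities
  have key1 : Ap * A * Bp = Bp := by
    calc Ap * A * Bp = Bp * B * Bp := by rw [hPeqQ]
    _ = Bp := hB2
  have key2 : Bp * A * Ap = Bp := by
    have h := congrArg Matrix.transpose key1
    rw [transpose_mul, hBpsym, hA4] at h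
    calc Bp * A * Ap = Bp * (A * Ap) := by rw [mul_assoc]
    _ = Bp * (Ap * A) := by rw [hAcomm]
    _ = Bp := h
  -- The algebraic identity behind the inequality
  have hid : Ap - Bp = (Ap - Bp) * (A * (Ap - Bp)) + Bp * ((B - A) * Bp) := by
    have expand : (Ap - Bp) * (A * (Ap - Bp)) + Bp * ((B - A) * Bp)
        = Ap * A * Ap - Ap * A * Bp - Bp * A * Ap + Bp * B * Bp := by noncomm_ring
    rw [expand, hA2, key1, key2, hB2]
    abel
  have hSsym : (Ap - Bp)ᵀ = Ap - Bp := by rw [transpose_sub, hApsym, hBpsym]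
  have symdot : ∀ (S : Matrix (Fin n) (Fin n) ℝ), Sᵀ = S →
      ∀ (x u : Fin n → ℝ), x ⬝ᵥ (S *ᵥ u) = (S *ᵥ x) ⬝ᵥ u := by
    intro S hS x u
    rw [dotProduct_mulVec]
    congr 1
    rw [← hS, vecMul_transpose, hS]
  intro x
  have p1 : (0:ℝ) ≤ ((Ap - Bp) *ᵥ x) ⬝ᵥ (A *ᵥ ((Ap - Bp) *ᵥ x)) := by
    have := hA.dotProduct_mulVec_nonneg ((Ap - Bp) *ᵥ x)
    simpa using this
  have p2 : (0:ℝ) ≤ (Bp *ᵥ x) ⬝ᵥ ((B - A) *ᵥ (Bp *ᵥ x)) := by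
    have := hAB.dotProduct_mulVec_nonneg (Bp *ᵥ x)
    simpa using this
  have e1 : x ⬝ᵥ (Ap *ᵥ x) - x ⬝ᵥ (Bp *ᵥ x)
      = ((Ap - Bp) *ᵥ x) ⬝ᵥ (A *ᵥ ((Ap - Bp) *ᵥ x))
        + (Bp *ᵥ x) ⬝ᵥ ((B - A) *ᵥ (Bp *ᵥ x)) := by
    calc x ⬝ᵥ (Ap *ᵥ x) - x ⬝ᵥ (Bp *ᵥ x) = x ⬝ᵥ ((Ap - Bp) *ᵥ x) := by
          rw [sub_mulVec, dotProduct_sub]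
    _ = x ⬝ᵥ (((Ap - Bp) * (A * (Ap - Bp)) + Bp * ((B - A) * Bp)) *ᵥ x) := by rw [← hid]
    _ = x ⬝ᵥ ((Ap - Bp) *ᵥ ((A * (Ap - Bp)) *ᵥ x)) + x ⬝ᵥ (Bp *ᵥ (((B - A) * Bp) *ᵥ x)) := by
          rw [add_mulVec, dotProduct_add, mulVec_mulVec, mulVec_mulVec]
    _ = ((Ap - Bp) *ᵥ x) ⬝ᵥ ((A * (Ap - Bp)) *ᵥ x) + (Bp *ᵥ x) ⬝ᵥ (((B - A) * Bp) *ᵥ x) := by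
          rw [symdot _ hSsym, symdot _ hBpsym]
    _ = ((Ap - Bp) *ᵥ x) ⬝ᵥ (A *ᵥ ((Ap - Bp) *ᵥ x))
        + (Bp *ᵥ x) ⬝ᵥ ((B - A) *ᵥ (Bp *ᵥ x)) := by
          rw [← mulVec_mulVec, ← mulVec_mulVec]
  linarith
end

section
/- Let w be a weighted graph on a finite vertex set V, let v₀ ∈ V be a vertex with d = Σ_u w(v₀,u) > 0, and let V' = V \ {v₀}. Write the Laplacian L of w in block form with respect to the partition ({v₀}, V') as L = [[d, bᵀ],[b, L']]. Then the Schur complement L' − (1/d) · b bᵀ is the Laplacian of a weighted graph on V': there exists a symmetric function w'' : V' → V' → ℝ with w''(u,u) = 0 and w''(u,u') ≥ 0 for all u, u' ∈ V' whose Laplacian equals L' − (1/d) · b bᵀ. -/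
open Matrix

/-- Eliminating a vertex `v₀` of positive weighted degree `d` from the
Laplacian of a weighted graph, the Schur complement `L' − (1/d)·b bᵀ` is again the
Laplacian of a weighted graph on the remaining vertices. -/
theorem schur_complement_is_laplacian {V : Type*} [Fintype V] [DecidableEq V]
    (w : V → V → ℝ) (hsym : ∀ u v, w u v = w v u)
    (hnn : ∀ u v, 0 ≤ w u v) (hdiag : ∀ u, w u u = 0)
    (v₀ : V) (d : ℝ) (hd : d = ∑ u, w v₀ u) (hdpos : 0 < d)
    (L : Matrix V V ℝ)
    (hL : L = Matrix.of fun u v => if u = v then ∑ x, w u x else - w u v)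
    (b : {x : V // x ≠ v₀} → ℝ) (hb : ∀ u, b u = L u.1 v₀)
    (L' : Matrix {x : V // x ≠ v₀} {x : V // x ≠ v₀} ℝ)
    (hL' : ∀ u u', L' u u' = L u.1 u'.1) :
    ∃ w'' : {x : V // x ≠ v₀} → {x : V // x ≠ v₀} → ℝ,
      (∀ u u', w'' u u' = w'' u' u) ∧ (∀ u, w'' u u = 0) ∧ (∀ u u', 0 ≤ w'' u u') ∧
      (Matrix.of fun u u' => if u = u' then ∑ x, w'' u x else - w'' u u')
        = L' - d⁻¹ • Matrix.vecMulVec b b := by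
  refine ⟨fun u u' => if u = u' then 0 else w u.1 u'.1 + w u.1 v₀ * w v₀ u'.1 / d,
    ?_, ?_, ?_, ?_⟩
  · intro u u'
    by_cases h : u = u'
    · simp [h]
    · simp only [h, Ne.symm h, if_false]
      rw [hsym u.1 u'.1, hsym u.1 v₀, hsym v₀ u'.1]
      ring
  · intro u; simp
  · intro u u'
    by_cases h : u = u'
    · simp [h]
    · simp only [h, if_false]
      exact add_nonneg (hnn _ _)
        (div_nonneg (mul_nonneg (hnn _ _) (hnn _ _)) hdpos.le)
  · ext u u'
    have hbu : ∀ u : {x : V // x ≠ v₀}, b u = - w u.1 v₀ := by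
      intro u; rw [hb, hL]; simp [u.2]
    simp only [Matrix.of_apply, Matrix.sub_apply, Matrix.smul_apply, Matrix.vecMulVec_apply,
      smul_eq_mul, hL', hL, hbu]
    by_cases h : u = u'
    · subst h
      simp only [if_pos rfl, if_pos rfl]
      -- compute the row sum
      have key : (∑ x : {x : V // x ≠ v₀},
          if u = x then (0:ℝ) else w u.1 x.1 + w u.1 v₀ * w v₀ x.1 / d)
          = (∑ x : {x : V // x ≠ v₀}, (w u.1 x.1 + w u.1 v₀ * w v₀ x.1 / d))
            - (w u.1 u.1 + w u.1 v₀ * w v₀ u.1 / d) := by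
        rw [← Finset.add_sum_erase _ _ (Finset.mem_univ u), if_pos rfl, zero_add,
          ← Finset.sum_erase_eq_sub (Finset.mem_univ u)]
        refine Finset.sum_congr rfl fun x hx => ?_
        rw [if_neg fun hux => (Finset.mem_erase.mp hx).1 hux.symm]
      rw [key, Finset.sum_add_distrib]
      have h1 : (∑ x : {x : V // x ≠ v₀}, w u.1 x.1) = (∑ x, w u.1 x) - w u.1 v₀ := by
        rw [← Finset.sum_erase_eq_sub (Finset.mem_univ v₀)]
        exact (Finset.sum_subtype _ (by simp [Finset.mem_erase, and_comm]) _).symm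
      have h2 : (∑ x : {x : V // x ≠ v₀}, w u.1 v₀ * w v₀ x.1 / d)
          = w u.1 v₀ * ((∑ x, w v₀ x) - w v₀ v₀) / d := by
        rw [← Finset.sum_erase_eq_sub (Finset.mem_univ v₀), Finset.mul_sum, Finset.sum_div]
        exact (Finset.sum_subtype (Finset.univ.erase v₀)
          (fun x => by simp [Finset.mem_erase, and_comm])
          (fun i => w u.1 v₀ * w v₀ i / d)).symm
      rw [h1, h2, hdiag, hdiag, hsym v₀ u.1, ← hd]
      field_simp
      simp only [if_true]
      field_simp
      ring
    · have h' : u.1 ≠ u'.1 := fun hh => h (Subtype.ext hh)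
      simp only [if_neg h, if_neg h']
      rw [hsym v₀ u'.1]
      ring
end

section
/- Let w be a weighted graph on a finite vertex set V whose support graph is connected, with Laplacian L, and let T be a spanning tree of the support graph. Then for every edge e = {u,v} with w(u,v) > 0, the weighted effective resistance satisfies w(u,v) · (χ_u − χ_v)ᵀ L⁺ (χ_u − χ_v) ≤ stretch_T(e). -/
open Matrix

section ERSAux

variable {V : Type*} [Fintype V] [DecidableEq V]

private lemma ers_dot (a b : V) (y : V → ℝ) :
    (Pi.single a 1 - Pi.single b 1 : V → ℝ) ⬝ᵥ y = y a - y b := by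
  simp [dotProduct, sub_mul, Finset.sum_sub_distrib, Pi.single_apply, ite_mul]

private lemma ers_sum_chi (a b : V) :
    ∑ x, (Pi.single a 1 - Pi.single b 1 : V → ℝ) x = 0 := by
  simp [Pi.single_apply, Finset.sum_sub_distrib]

variable (w : V → V → ℝ)

private lemma ers_mulVec (hdiag : ∀ u, w u u = 0)
    (L : Matrix V V ℝ)
    (hL : L = Matrix.of fun u v => if u = v then ∑ x, w u x else - w u v)
    (φ : V → ℝ) (x : V) :
    (L *ᵥ φ) x = ∑ y, w x y * (φ x - φ y) := by
  subst hL
  simp only [mulVec, dotProduct, of_apply]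
  have h1 : ∀ y : V, (if x = y then ∑ z, w x z else -w x y) * φ y
      = (if y = x then (∑ z, w x z) * φ x else 0) - w x y * φ y := by
    intro y
    by_cases h : x = y
    · subst h; simp [hdiag x]
    · simp [h, Ne.symm h]
  rw [Finset.sum_congr rfl fun y _ => h1 y, Finset.sum_sub_distrib,
    Finset.sum_ite_eq' Finset.univ x fun _ => (∑ z, w x z) * φ x,
    if_pos (Finset.mem_univ x), Finset.sum_mul, ← Finset.sum_sub_distrib]
  exact Finset.sum_congr rfl fun y _ => by ring

private lemma ers_energy (hsym : ∀ u v, w u v = w v u) (hdiag : ∀ u, w u u = 0)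
    (L : Matrix V V ℝ)
    (hL : L = Matrix.of fun u v => if u = v then ∑ x, w u x else - w u v)
    (φ : V → ℝ) :
    2 * (φ ⬝ᵥ (L *ᵥ φ)) = ∑ x, ∑ y, w x y * (φ x - φ y) ^ 2 := by
  have hE : φ ⬝ᵥ (L *ᵥ φ) = ∑ x, ∑ y, w x y * (φ x - φ y) * φ x := by
    simp only [dotProduct, ers_mulVec w hdiag L hL φ, Finset.mul_sum]
    exact Finset.sum_congr rfl fun x _ => Finset.sum_congr rfl fun y _ => by ring
  have hE2 : φ ⬝ᵥ (L *ᵥ φ) = ∑ x, ∑ y, w x y * (φ y - φ x) * φ y := by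
    rw [hE, Finset.sum_comm]
    exact Finset.sum_congr rfl fun x _ => Finset.sum_congr rfl fun y _ => by
      rw [hsym y x]
  calc 2 * (φ ⬝ᵥ (L *ᵥ φ))
      = (∑ x, ∑ y, w x y * (φ x - φ y) * φ x)
        + ∑ x, ∑ y, w x y * (φ y - φ x) * φ y := by rw [← hE, ← hE2]; ring
    _ = ∑ x, ∑ y, w x y * (φ x - φ y) ^ 2 := by
      rw [← Finset.sum_add_distrib]
      refine Finset.sum_congr rfl fun x _ => ?_
      rw [← Finset.sum_add_distrib]
      exact Finset.sum_congr rfl fun y _ => by ring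

private lemma ers_sum_mulVec (hsym : ∀ u v, w u v = w v u) (hdiag : ∀ u, w u u = 0)
    (L : Matrix V V ℝ)
    (hL : L = Matrix.of fun u v => if u = v then ∑ x, w u x else - w u v)
    (φ : V → ℝ) :
    ∑ x, (L *ᵥ φ) x = 0 := by
  have h : ∑ x, (L *ᵥ φ) x = ∑ x, ∑ y, w x y * (φ x - φ y) := by
    simp only [ers_mulVec w hdiag L hL φ]
  have h2 : ∑ x, ∑ y, w x y * (φ x - φ y)
      = ∑ x, ∑ y, -(w x y * (φ x - φ y)) := by
    conv_lhs => rw [Finset.sum_comm]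
    exact Finset.sum_congr rfl fun x _ => Finset.sum_congr rfl fun y _ => by
      rw [hsym y x]; ring
  simp only [Finset.sum_neg_distrib] at h2
  linarith [h, h2]

private lemma ers_ker (hsym : ∀ u v, w u v = w v u) (hnn : ∀ u v, 0 ≤ w u v)
    (hdiag : ∀ u, w u u = 0)
    (G : SimpleGraph V) (hG : ∀ u v, G.Adj u v ↔ 0 < w u v) (hconn : G.Connected)
    (L : Matrix V V ℝ)
    (hL : L = Matrix.of fun u v => if u = v then ∑ x, w u x else - w u v)
    (z : V → ℝ) (hz : L *ᵥ z = 0) :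
    ∀ a b : V, z a = z b := by
  have hE : ∑ x, ∑ y, w x y * (z x - z y) ^ 2 = 0 := by
    rw [← ers_energy w hsym hdiag L hL z, hz]
    simp
  have hnn2 : ∀ x y : V, 0 ≤ w x y * (z x - z y) ^ 2 :=
    fun x y => mul_nonneg (hnn x y) (sq_nonneg _)
  have hterm : ∀ x y : V, w x y * (z x - z y) ^ 2 = 0 := by
    intro x y
    have h1 := (Finset.sum_eq_zero_iff_of_nonneg
      (fun x _ => Finset.sum_nonneg fun y _ => hnn2 x y)).mp hE x (Finset.mem_univ x)
    exact (Finset.sum_eq_zero_iff_of_nonneg fun y _ => hnn2 x y).mp h1 y (Finset.mem_univ y)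
  have hadj : ∀ {x y : V}, G.Adj x y → z x = z y := by
    intro x y hxy
    have hw := (hG x y).mp hxy
    rcases mul_eq_zero.mp (hterm x y) with h | h
    · exact absurd h (ne_of_gt hw)
    · have := pow_eq_zero_iff (n := 2) (by norm_num) |>.mp h
      linarith [sub_eq_zero.mp this]
  intro a b
  obtain ⟨p⟩ := hconn.preconnected a b
  induction p with
  | nil => rfl
  | cons h q ih => exact (hadj h).trans ih

private lemma ers_Lsym (hsym : ∀ u v, w u v = w v u)
    (L : Matrix V V ℝ)
    (hL : L = Matrix.of fun u v => if u = v then ∑ x, w u x else - w u v) :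
    Lᵀ = L := by
  subst hL
  ext a b
  simp only [transpose_apply, of_apply]
  by_cases h : a = b
  · subst h; simp
  · rw [if_neg (Ne.symm h), if_neg h, hsym]

private lemma ers_LLp (hsym : ∀ u v, w u v = w v u) (hnn : ∀ u v, 0 ≤ w u v)
    (hdiag : ∀ u, w u u = 0)
    (G : SimpleGraph V) (hG : ∀ u v, G.Adj u v ↔ 0 < w u v) (hconn : G.Connected)
    (L Lp : Matrix V V ℝ)
    (hL : L = Matrix.of fun u v => if u = v then ∑ x, w u x else - w u v)
    (hp1 : L * Lp * L = L) (hp3 : (L * Lp)ᵀ = L * Lp)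
    (x : V → ℝ) (hx : ∑ a, x a = 0) :
    L *ᵥ (Lp *ᵥ x) = x := by
  have hLsym := ers_Lsym w hsym L hL
  have hLL : L * (L * Lp) = L := by
    have h := congrArg Matrix.transpose hp1
    rwa [Matrix.transpose_mul, hp3, hLsym] at h
  set r : V → ℝ := x - L *ᵥ (Lp *ᵥ x) with hr
  have hLr : L *ᵥ r = 0 := by
    rw [hr, Matrix.mulVec_sub, Matrix.mulVec_mulVec, Matrix.mulVec_mulVec,
      Matrix.mul_assoc, hLL, sub_self]
  have hconst := ers_ker w hsym hnn hdiag G hG hconn L hL r hLr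
  have hsum : ∑ a, r a = 0 := by
    have h2 : ∑ a, (L *ᵥ (Lp *ᵥ x)) a = 0 := ers_sum_mulVec w hsym hdiag L hL _
    simp only [hr, Pi.sub_apply, Finset.sum_sub_distrib, hx, h2, sub_zero]
  have hzero : ∀ a, r a = 0 := by
    intro a
    have hcarde : ∑ b : V, r b = (Fintype.card V : ℝ) * r a := by
      rw [Finset.sum_congr rfl fun b _ => hconst b a]
      simp [Finset.card_univ, mul_comm]
    have hN : Nonempty V := hconn.nonempty
    have hcard : (0:ℝ) < (Fintype.card V : ℝ) := by exact_mod_cast Fintype.card_pos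
    have := hcarde.symm.trans hsum
    exact (mul_eq_zero.mp this).resolve_left (ne_of_gt hcard) 
  funext a
  have := hzero a
  simp only [hr, Pi.sub_apply] at this
  linarith

private lemma ers_dot_symm (hsym : ∀ u v, w u v = w v u) (hnn : ∀ u v, 0 ≤ w u v)
    (hdiag : ∀ u, w u u = 0)
    (G : SimpleGraph V) (hG : ∀ u v, G.Adj u v ↔ 0 < w u v) (hconn : G.Connected)
    (L Lp : Matrix V V ℝ)
    (hL : L = Matrix.of fun u v => if u = v then ∑ x, w u x else - w u v)
    (hp1 : L * Lp * L = L) (hp3 : (L * Lp)ᵀ = L * Lp)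
    (x y : V → ℝ) (hx : ∑ a, x a = 0) (hy : ∑ a, y a = 0) :
    x ⬝ᵥ (Lp *ᵥ y) = y ⬝ᵥ (Lp *ᵥ x) := by
  have hLsym := ers_Lsym w hsym L hL
  calc x ⬝ᵥ (Lp *ᵥ y)
      = (L *ᵥ (Lp *ᵥ x)) ⬝ᵥ (Lp *ᵥ y) := by
        rw [ers_LLp w hsym hnn hdiag G hG hconn L Lp hL hp1 hp3 x hx]
    _ = (Lp *ᵥ y) ⬝ᵥ (L *ᵥ (Lp *ᵥ x)) := dotProduct_comm _ _
    _ = ((Lp *ᵥ y) ᵥ* L) ⬝ᵥ (Lp *ᵥ x) := dotProduct_mulVec _ _ _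
    _ = (L *ᵥ (Lp *ᵥ y)) ⬝ᵥ (Lp *ᵥ x) := by
        rw [← hLsym, Matrix.vecMul_transpose, hLsym]
    _ = y ⬝ᵥ (Lp *ᵥ x) := by
        rw [ers_LLp w hsym hnn hdiag G hG hconn L Lp hL hp1 hp3 y hy]

private lemma ers_minp (hsym : ∀ u v, w u v = w v u) (hnn : ∀ u v, 0 ≤ w u v)
    (hdiag : ∀ u, w u u = 0)
    (G : SimpleGraph V) (hG : ∀ u v, G.Adj u v ↔ 0 < w u v) (hconn : G.Connected)
    (L : Matrix V V ℝ)
    (hL : L = Matrix.of fun u v => if u = v then ∑ x, w u x else - w u v)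
    (a c : V) (hac : a ≠ c) (φ : V → ℝ)
    (hφ : L *ᵥ φ = (Pi.single a 1 - Pi.single c 1 : V → ℝ)) :
    ∀ b, φ c ≤ φ b := by
  have hN : Nonempty V := hconn.nonempty
  obtain ⟨x0, -, hx0⟩ := Finset.exists_min_image Finset.univ φ ⟨a, Finset.mem_univ a⟩
  have hmin : ∀ b, φ x0 ≤ φ b := fun b => hx0 b (Finset.mem_univ b)
  have key : ∀ (x y : V) (p : G.Walk x y), (∀ b, φ x ≤ φ b) → φ c = φ x ∨ φ y = φ x := by
    intro x y p
    induction p with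
    | nil => exact fun _ => Or.inr rfl
    | @cons x z y hadj q ih =>
      intro hxmin
      by_cases hxc : x = c
      · exact Or.inl (by rw [hxc])
      · have hval : (0:ℝ) ≤ (L *ᵥ φ) x := by
          rw [hφ]
          simp only [Pi.sub_apply, Pi.single_apply]
          rw [if_neg hxc]
          split <;> norm_num
        have hterms : ∀ y' ∈ Finset.univ, w x y' * (φ x - φ y') ≤ 0 := fun y' _ =>
          mul_nonpos_of_nonneg_of_nonpos (hnn x y') (sub_nonpos.mpr (hxmin y'))
        have hsum0 : ∑ y', w x y' * (φ x - φ y') = 0 :=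
          le_antisymm (Finset.sum_nonpos hterms)
            (by rw [← ers_mulVec w hdiag L hL φ x]; exact hval)
        have hz0 := (Finset.sum_eq_zero_iff_of_nonpos hterms).mp hsum0 z (Finset.mem_univ z)
        have hwxz : 0 < w x z := (hG x z).mp hadj
        have hφz : φ z = φ x := by
          rcases mul_eq_zero.mp hz0 with h | h
          · exact absurd h (ne_of_gt hwxz)
          · linarith [sub_eq_zero.mp h]
        have hzmin : ∀ b, φ z ≤ φ b := fun b => hφz ▸ hxmin b
        rcases ih hzmin with h | h
        · exact Or.inl (h.trans hφz)
        · exact Or.inr (h.trans hφz)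
  intro b
  obtain ⟨p⟩ := hconn.preconnected x0 c
  have := key x0 c p hmin
  have hc : φ c = φ x0 := by rcases this with h | h <;> exact h
  rw [hc]; exact hmin b

private lemma ers_edge (hsym : ∀ u v, w u v = w v u) (hnn : ∀ u v, 0 ≤ w u v)
    (hdiag : ∀ u, w u u = 0)
    (G : SimpleGraph V) (hG : ∀ u v, G.Adj u v ↔ 0 < w u v) (hconn : G.Connected)
    (L Lp : Matrix V V ℝ)
    (hL : L = Matrix.of fun u v => if u = v then ∑ x, w u x else - w u v)
    (hp1 : L * Lp * L = L) (hp3 : (L * Lp)ᵀ = L * Lp)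
    (a b : V) (hab : 0 < w a b) :
    (Pi.single a 1 - Pi.single b 1 : V → ℝ) ⬝ᵥ
      (Lp *ᵥ (Pi.single a 1 - Pi.single b 1 : V → ℝ)) ≤ 1 / w a b := by
  have hne : a ≠ b := by
    intro h; rw [h, hdiag] at hab; exact lt_irrefl _ hab
  set χ : V → ℝ := Pi.single a 1 - Pi.single b 1 with hχ
  set φ : V → ℝ := Lp *ᵥ χ with hφdef
  have hLφ : L *ᵥ φ = χ :=
    ers_LLp w hsym hnn hdiag G hG hconn L Lp hL hp1 hp3 χ (ers_sum_chi a b)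
  set r : ℝ := χ ⬝ᵥ φ with hrdef
  have hrφ : r = φ a - φ b := ers_dot a b φ
  have hEr : 2 * r = ∑ x, ∑ y, w x y * (φ x - φ y) ^ 2 := by
    have h := ers_energy w hsym hdiag L hL φ
    rw [hLφ, dotProduct_comm] at h
    exact h
  have hnn2 : ∀ x y : V, 0 ≤ w x y * (φ x - φ y) ^ 2 :=
    fun x y => mul_nonneg (hnn x y) (sq_nonneg _)
  have hge : w a b * (φ a - φ b) ^ 2 + w b a * (φ b - φ a) ^ 2 ≤ 2 * r := by
    rw [hEr]
    have h1 : w a b * (φ a - φ b) ^ 2 ≤ ∑ y, w a y * (φ a - φ y) ^ 2 :=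
      Finset.single_le_sum (fun y _ => hnn2 a y) (Finset.mem_univ b)
    have h2 : w b a * (φ b - φ a) ^ 2 ≤ ∑ y, w b y * (φ b - φ y) ^ 2 :=
      Finset.single_le_sum (fun y _ => hnn2 b y) (Finset.mem_univ a)
    have h3 : (∑ y, w a y * (φ a - φ y) ^ 2) + (∑ y, w b y * (φ b - φ y) ^ 2)
        ≤ ∑ x, ∑ y, w x y * (φ x - φ y) ^ 2 := by
      have h := Finset.sum_le_sum_of_subset_of_nonneg
        (f := fun x => ∑ y, w x y * (φ x - φ y) ^ 2)
        (Finset.subset_univ ({a, b} : Finset V))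
        (fun x _ _ => Finset.sum_nonneg fun y _ => hnn2 x y)
      rwa [Finset.sum_pair hne] at h
    linarith
  have hkey : w a b * r ^ 2 ≤ r := by
    have e1 : w b a = w a b := hsym b a
    have e2 : (φ a - φ b) ^ 2 = r ^ 2 := by rw [hrφ]
    have e3 : (φ b - φ a) ^ 2 = r ^ 2 := by rw [hrφ]; ring
    rw [e1, e2, e3] at hge
    linarith
  have hrnn : 0 ≤ r := by
    have h : 0 ≤ ∑ x, ∑ y, w x y * (φ x - φ y) ^ 2 :=
      Finset.sum_nonneg fun x _ => Finset.sum_nonneg fun y _ => hnn2 x y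
    linarith [hEr ▸ h]
  rcases eq_or_lt_of_le hrnn with h | h
  · rw [← h]; positivity
  · rw [le_div_iff₀ hab]
    have h4 : w a b * r * r ≤ 1 * r := by
      have : w a b * r ^ 2 = (w a b * r) * r := by ring
      linarith [hkey, this ▸ hkey]
    have := le_of_mul_le_mul_right h4 h
    linarith

private lemma ers_triangle (hsym : ∀ u v, w u v = w v u) (hnn : ∀ u v, 0 ≤ w u v)
    (hdiag : ∀ u, w u u = 0)
    (G : SimpleGraph V) (hG : ∀ u v, G.Adj u v ↔ 0 < w u v) (hconn : G.Connected)
    (L Lp : Matrix V V ℝ)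
    (hL : L = Matrix.of fun u v => if u = v then ∑ x, w u x else - w u v)
    (hp1 : L * Lp * L = L) (hp3 : (L * Lp)ᵀ = L * Lp)
    (a c b : V) :
    (Pi.single a 1 - Pi.single b 1 : V → ℝ) ⬝ᵥ
      (Lp *ᵥ (Pi.single a 1 - Pi.single b 1 : V → ℝ))
    ≤ (Pi.single a 1 - Pi.single c 1 : V → ℝ) ⬝ᵥ
        (Lp *ᵥ (Pi.single a 1 - Pi.single c 1 : V → ℝ))
      + (Pi.single c 1 - Pi.single b 1 : V → ℝ) ⬝ᵥ
        (Lp *ᵥ (Pi.single c 1 - Pi.single b 1 : V → ℝ)) := by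
  set χab : V → ℝ := Pi.single a 1 - Pi.single b 1 with hχab
  set χac : V → ℝ := Pi.single a 1 - Pi.single c 1 with hχac
  set χcb : V → ℝ := Pi.single c 1 - Pi.single b 1 with hχcb
  by_cases hac : a = c
  · subst hac
    have : χac = 0 := by rw [hχac, sub_self]
    have hz : χac ⬝ᵥ (Lp *ᵥ χac) = 0 := by rw [this]; simp
    have heq : χab = χcb := by rw [hχab, hχcb]
    rw [hz, heq, zero_add]
  by_cases hcb : c = b
  · subst hcb
    have : χcb = 0 := by rw [hχcb, sub_self]
    have hz : χcb ⬝ᵥ (Lp *ᵥ χcb) = 0 := by rw [this]; simp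
    have heq : χab = χac := by rw [hχab, hχac]
    rw [hz, heq, add_zero]
  have hsplit : χab = χac + χcb := by
    rw [hχab, hχac, hχcb]; abel
  set φac : V → ℝ := Lp *ᵥ χac with hφac
  set φcb : V → ℝ := Lp *ᵥ χcb with hφcb
  have hLφac : L *ᵥ φac = χac :=
    ers_LLp w hsym hnn hdiag G hG hconn L Lp hL hp1 hp3 χac (ers_sum_chi a c)
  have hLφcb : L *ᵥ φcb = χcb :=
    ers_LLp w hsym hnn hdiag G hG hconn L Lp hL hp1 hp3 χcb (ers_sum_chi c b)
  -- min principle: φac c ≤ φac x for all x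
  have hminac : ∀ x, φac c ≤ φac x :=
    ers_minp w hsym hnn hdiag G hG hconn L hL a c hac φac hLφac
  -- max principle at c for φcb : φcb x ≤ φcb c
  have hmaxcb : ∀ x, φcb x ≤ φcb c := by
    have hL' : L *ᵥ (-φcb) = (Pi.single b 1 - Pi.single c 1 : V → ℝ) := by
      rw [Matrix.mulVec_neg, hLφcb, hχcb, neg_sub]
    have := ers_minp w hsym hnn hdiag G hG hconn L hL b c
      (fun h => hcb h.symm) (-φcb) hL'
    intro x
    have h := this x
    simp only [Pi.neg_apply] at h
    linarith
  have h1 : χac ⬝ᵥ (Lp *ᵥ χab) ≤ χac ⬝ᵥ (Lp *ᵥ χac) := by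
    rw [ers_dot_symm w hsym hnn hdiag G hG hconn L Lp hL hp1 hp3 χac χab
      (ers_sum_chi a c) (ers_sum_chi a b)]
    rw [hχab]
    rw [ers_dot a b φac]
    rw [hχac, ers_dot a c φac]
    linarith [hminac b]
  have h2 : χcb ⬝ᵥ (Lp *ᵥ χab) ≤ χcb ⬝ᵥ (Lp *ᵥ χcb) := by
    rw [ers_dot_symm w hsym hnn hdiag G hG hconn L Lp hL hp1 hp3 χcb χab
      (ers_sum_chi c b) (ers_sum_chi a b)]
    rw [hχab, ers_dot a b φcb, hχcb, ers_dot c b φcb]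
    linarith [hmaxcb a]
  calc χab ⬝ᵥ (Lp *ᵥ χab) = χac ⬝ᵥ (Lp *ᵥ χab) + χcb ⬝ᵥ (Lp *ᵥ χab) := by
        rw [hsplit, add_dotProduct]
    _ ≤ χac ⬝ᵥ (Lp *ᵥ χac) + χcb ⬝ᵥ (Lp *ᵥ χcb) := add_le_add h1 h2

end ERSAux

/-- Rayleigh monotonicity.  For a spanning tree `T` of the support graph
of a connected weighted graph, the weighted effective resistance of any edge is at most its
stretch over `T`. -/
theorem weighted_effective_resistance_le_stretch {V : Type*} [Fintype V] [DecidableEq V]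
    (w : V → V → ℝ) (hsym : ∀ u v, w u v = w v u)
    (hnn : ∀ u v, 0 ≤ w u v) (hdiag : ∀ u, w u u = 0)
    (G : SimpleGraph V) (hG : ∀ u v, G.Adj u v ↔ 0 < w u v) (hconn : G.Connected)
    (L Lp : Matrix V V ℝ)
    (hL : L = Matrix.of fun u v => if u = v then ∑ x, w u x else - w u v)
    (hp1 : L * Lp * L = L) (hp2 : Lp * L * Lp = Lp)
    (hp3 : (L * Lp)ᵀ = L * Lp) (hp4 : (Lp * L)ᵀ = Lp * L)
    (T : SimpleGraph V) (hTG : T ≤ G) (hTconn : T.Connected) (hTacyc : T.IsAcyclic)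
    (u v : V) (huv : 0 < w u v)
    (p : T.Walk u v) (hp : p.IsPath) :
    w u v * ((Pi.single u 1 - Pi.single v 1 : V → ℝ) ⬝ᵥ
        (Lp *ᵥ (Pi.single u 1 - Pi.single v 1 : V → ℝ)))
      ≤ w u v * (p.edges.map fun e => 1 / Sym2.lift ⟨w, hsym⟩ e).sum := by
  have key : ∀ (x y : V) (q : T.Walk x y),
      ((Pi.single x 1 - Pi.single y 1 : V → ℝ) ⬝ᵥ
        (Lp *ᵥ (Pi.single x 1 - Pi.single y 1 : V → ℝ)))
      ≤ (q.edges.map fun e => 1 / Sym2.lift ⟨w, hsym⟩ e).sum := by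
    intro x y q
    induction q with
    | nil => simp
    | @cons x z y hadj q ih =>
      have hwxz : 0 < w x z := (hG x z).mp (hTG hadj)
      have htri := ers_triangle w hsym hnn hdiag G hG hconn L Lp hL hp1 hp3 x z y
      have hedge := ers_edge w hsym hnn hdiag G hG hconn L Lp hL hp1 hp3 x z hwxz
      have hedges : ((SimpleGraph.Walk.cons hadj q).edges.map
          fun e => 1 / Sym2.lift ⟨w, hsym⟩ e).sum
          = 1 / w x z + (q.edges.map fun e => 1 / Sym2.lift ⟨w, hsym⟩ e).sum := by
        rw [SimpleGraph.Walk.edges_cons, List.map_cons, List.sum_cons, Sym2.lift_mk]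
      rw [hedges]
      linarith
  exact mul_le_mul_of_nonneg_left (key u v p) (hnn u v)
end
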